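/- Let I ≥ 1, let J be a nonempty finite type, and for each j let F j ⊆ (Fin I → ℝ) be a nonempty compact convex set of nonnegative vectors, π j : Fin I → ℝ, and n : Fin I → ℝ. Assume feasibility: there exists η : J → (Fin I → ℝ) with η j ∈ F j for all j and ∑_j η j = n. For w : Fin I → ℝ define S j w = sSup {w·y | y ∈ F j}. Then sInf { ∑_j (π j)·(x j) | x : J → (Fin I → ℝ), (∀ j, x j ∈ F j) ∧ ∑_j x j = n } = ⨆ (λ : Fin I → ℝ), (λ·n − ∑_j S j (λ − π j)). -/

import Mathlib

/-- Proposition 2 (strong duality part): the value of the outer program equals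
the value of its dual, formulated via the support functions of the
OSP-feasible sets. -/
theorem stmt17 (I : ℕ) (hI : 1 ≤ I) (J : Type*) [Fintype J] [Nonempty J]
    (F : J → Set (Fin I → ℝ))
    (hne : ∀ j, (F j).Nonempty) (hcomp : ∀ j, IsCompact (F j))
    (hconv : ∀ j, Convex ℝ (F j))
    (hnn : ∀ j, ∀ x ∈ F j, ∀ i, 0 ≤ x i)
    (π : J → Fin I → ℝ) (n : Fin I → ℝ)
    (η : J → Fin I → ℝ) (hη : ∀ j, η j ∈ F j) (hsum : ∑ j, η j = n)
    (S : J → (Fin I → ℝ) → ℝ)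
    (hS : ∀ j w, S j w = sSup {t : ℝ | ∃ y ∈ F j, t = ∑ i, w i * y i}) :
    sInf {t : ℝ | ∃ x : J → Fin I → ℝ, (∀ j, x j ∈ F j) ∧ (∑ j, x j = n) ∧
        t = ∑ j, ∑ i, π j i * x j i} =
    ⨆ l : Fin I → ℝ, ((∑ i, l i * n i) - ∑ j, S j (fun i => l i - π j i)) := by
  classical
  set P : Set ℝ := {t | ∃ x : J → Fin I → ℝ, (∀ j, x j ∈ F j) ∧ (∑ j, x j = n) ∧
      t = ∑ j, ∑ i, π j i * x j i} with hPdef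
  have hPne : P.Nonempty := ⟨_, η, hη, hsum, rfl⟩
  have hKcomp : IsCompact (Set.univ.pi F) := isCompact_univ_pi fun j => hcomp j
  have hKconv : Convex ℝ (Set.univ.pi F) := convex_pi fun j _ => hconv j
  -- the linear map packaging total assignment and total cost
  let Φ : (J → Fin I → ℝ) →ₗ[ℝ] (Fin I → ℝ) × ℝ :=
    { toFun := fun x => (∑ j, x j, ∑ j, ∑ i, π j i * x j i)
      map_add' := by
        intro x y
        refine Prod.ext ?_ ?_
        · simp [Finset.sum_add_distrib]
        · simp [mul_add, Finset.sum_add_distrib]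
      map_smul' := by
        intro c x
        refine Prod.ext ?_ ?_
        · simp [Finset.smul_sum]
        · simp only [Pi.smul_apply, smul_eq_mul, RingHom.id_apply, Prod.smul_snd]
          rw [Finset.mul_sum]
          refine Finset.sum_congr rfl fun j _ => ?_
          rw [Finset.mul_sum]
          exact Finset.sum_congr rfl fun i _ => by ring }
  have hΦcont : Continuous Φ := Φ.continuous_of_finiteDimensional
  set G : Set ((Fin I → ℝ) × ℝ) := ⇑Φ '' Set.univ.pi F with hGdef
  have hGcomp : IsCompact G := hKcomp.image hΦcont
  have hGconv : Convex ℝ G := hKconv.linear_image Φ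
  -- the primal value is attained
  have hCcl : IsClosed {x : J → Fin I → ℝ | ∑ j, x j = n} := by
    have hc : Continuous fun x : J → Fin I → ℝ => ∑ j, x j := by
      exact continuous_finset_sum _ fun j _ => continuous_apply j
    exact isClosed_eq hc continuous_const
  have hCcomp : IsCompact ((Set.univ.pi F) ∩ {x | ∑ j, x j = n}) :=
    hKcomp.inter_right hCcl
  have hgcont : Continuous fun x : J → Fin I → ℝ => ∑ j, ∑ i, π j i * x j i := by
    refine continuous_finset_sum _ fun j _ => continuous_finset_sum _ fun i _ => ?_
    exact continuous_const.mul ((continuous_apply i).comp (continuous_apply j))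
  have hPeq : P = (fun x : J → Fin I → ℝ => ∑ j, ∑ i, π j i * x j i) ''
      ((Set.univ.pi F) ∩ {x | ∑ j, x j = n}) := by
    ext t; constructor
    · rintro ⟨x, h1, h2, rfl⟩; exact ⟨x, ⟨fun j _ => h1 j, h2⟩, rfl⟩
    · rintro ⟨x, ⟨h1, h2⟩, rfl⟩; exact ⟨x, fun j => h1 j (Set.mem_univ j), h2, rfl⟩
  have hPcomp : IsCompact P := hPeq ▸ hCcomp.image hgcont
  have hpmem : sInf P ∈ P := hPcomp.sInf_mem hPne
  set p := sInf P with hp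
  -- support sets as images
  have hSimg : ∀ (j) (w : Fin I → ℝ), {t : ℝ | ∃ y ∈ F j, t = ∑ i, w i * y i}
      = (fun y : Fin I → ℝ => ∑ i, w i * y i) '' F j := by
    intro j w; ext t
    constructor
    · rintro ⟨y, hy, rfl⟩; exact ⟨y, hy, rfl⟩
    · rintro ⟨y, hy, rfl⟩; exact ⟨y, hy, rfl⟩
  have hScont : ∀ w : Fin I → ℝ, Continuous fun y : Fin I → ℝ => ∑ i, w i * y i :=
    fun w => continuous_finset_sum _ fun i _ => continuous_const.mul (continuous_apply i)
  have hSmem : ∀ (j) (w : Fin I → ℝ), ∃ y ∈ F j, S j w = ∑ i, w i * y i := by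
    intro j w
    have hc : IsCompact ((fun y : Fin I → ℝ => ∑ i, w i * y i) '' F j) :=
      (hcomp j).image (hScont w)
    have hne' : ((fun y : Fin I → ℝ => ∑ i, w i * y i) '' F j).Nonempty := (hne j).image _
    have hmem := hc.sSup_mem hne'
    rw [hS j w, hSimg j w]
    obtain ⟨y, hy, hyy⟩ := hmem
    exact ⟨y, hy, hyy.symm⟩
  have hSle : ∀ (j) (w : Fin I → ℝ) (y), y ∈ F j → ∑ i, w i * y i ≤ S j w := by
    intro j w y hy
    rw [hS j w, hSimg j w]
    exact le_csSup ((hcomp j).image (hScont w)).bddAbove ⟨y, hy, rfl⟩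
  -- weak duality
  have hweak : ∀ l : Fin I → ℝ,
      (∑ i, l i * n i) - ∑ j, S j (fun i => l i - π j i) ≤ p := by
    intro l
    refine le_csInf hPne ?_
    rintro t ⟨x, hx, hxs, rfl⟩
    have h2 : ∑ j, ∑ i, (l i - π j i) * x j i ≤ ∑ j, S j (fun i => l i - π j i) :=
      Finset.sum_le_sum fun j _ => hSle j _ _ (hx j)
    have h3 : ∑ j, ∑ i, (l i - π j i) * x j i
        = (∑ i, l i * n i) - ∑ j, ∑ i, π j i * x j i := by
      have hn : (∑ i, l i * n i) = ∑ j, ∑ i, l i * x j i := by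
        rw [Finset.sum_comm]
        refine Finset.sum_congr rfl fun i _ => ?_
        rw [← Finset.mul_sum]
        congr 1
        rw [← hxs]; simp
      rw [hn, ← Finset.sum_sub_distrib]
      refine Finset.sum_congr rfl fun j _ => ?_
      rw [← Finset.sum_sub_distrib]
      exact Finset.sum_congr rfl fun i _ => by ring
    linarith
  have hbdd : BddAbove (Set.range fun l : Fin I → ℝ =>
      (∑ i, l i * n i) - ∑ j, S j (fun i => l i - π j i)) :=
    ⟨p, by rintro t ⟨l, rfl⟩; exact hweak l⟩
  refine le_antisymm ?_ (ciSup_le hweak)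
  refine le_of_forall_pos_le_add ?_
  intro ε hε
  obtain ⟨xh, hxh, hxhs, hxhp⟩ := hpmem
  have hz : ((n, p - ε) : (Fin I → ℝ) × ℝ) ∉ G := by
    rintro ⟨x, hx, hΦ⟩
    have h1 : ∑ j, x j = n := congrArg Prod.fst hΦ
    have h2 : ∑ j, ∑ i, π j i * x j i = p - ε := congrArg Prod.snd hΦ
    have hmem : p - ε ∈ P := ⟨x, fun j => hx j (Set.mem_univ j), h1, h2.symm⟩
    have := csInf_le hPcomp.bddBelow hmem
    rw [← hp] at this
    linarith
  obtain ⟨f, u, hfu, hub⟩ := geometric_hahn_banach_point_closed hGconv hGcomp.isClosed hz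
  have hflin : ∀ (v : Fin I → ℝ) (t : ℝ),
      f (v, t) = f (v, 0) + t * f ((0 : Fin I → ℝ), (1 : ℝ)) := by
    intro v t
    have hsplit : ((v, t) : (Fin I → ℝ) × ℝ)
        = (v, 0) + t • ((0 : Fin I → ℝ), (1 : ℝ)) := by
      refine Prod.ext ?_ ?_ <;> simp
    rw [hsplit, map_add, map_smul, smul_eq_mul]
  set s := f ((0 : Fin I → ℝ), (1 : ℝ)) with hsdef
  have hnp : ((n, p) : (Fin I → ℝ) × ℝ) ∈ G := by
    refine ⟨xh, fun j _ => hxh j, ?_⟩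
    show (∑ j, xh j, ∑ j, ∑ i, π j i * xh j i) = (n, p)
    exact Prod.ext hxhs hxhp.symm
  have hupn : u < f (n, p) := hub _ hnp
  have hspos : (0 : ℝ) < s := by
    rw [hflin] at hfu hupn
    nlinarith
  -- representation of the first-component functional
  have hrep : ∀ v : Fin I → ℝ,
      f (v, 0) = ∑ i, v i * f ((Pi.single i 1 : Fin I → ℝ), (0 : ℝ)) := by
    intro v
    have hv : ((v, 0) : (Fin I → ℝ) × ℝ)
        = ∑ i, v i • (((Pi.single i 1 : Fin I → ℝ), (0 : ℝ))) := by
      refine Prod.ext ?_ ?_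
      · rw [Prod.fst_sum]
        ext k
        simp [Pi.single_apply, Finset.sum_apply, mul_ite]
      · rw [Prod.snd_sum]; simp
    rw [hv, map_sum]
    exact Finset.sum_congr rfl fun i _ => by rw [map_smul, smul_eq_mul]
  set l : Fin I → ℝ := fun i => -(f ((Pi.single i 1 : Fin I → ℝ), (0 : ℝ))) / s with hldef
  have hfv : ∀ v : Fin I → ℝ, f (v, 0) = -s * ∑ i, l i * v i := by
    intro v
    rw [hrep v, Finset.mul_sum]
    refine Finset.sum_congr rfl fun i _ => ?_
    rw [hldef]
    field_simp
  choose y hy hSy using fun j => hSmem j (fun i => l i - π j i)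
  have hyG : Φ y ∈ G := ⟨y, fun j _ => hy j, rfl⟩
  have hkey : u < f (∑ j, y j, ∑ j, ∑ i, π j i * y j i) := hub _ hyG
  have hkey2 : u < -s * (∑ i, l i * (∑ j, y j) i) + (∑ j, ∑ i, π j i * y j i) * s := by
    rw [hflin, hfv] at hkey
    exact hkey
  have hfu2 : -s * (∑ i, l i * n i) + (p - ε) * s < u := by
    rw [hflin, hfv] at hfu
    exact hfu
  have hsum2 : ∑ j, S j (fun i => l i - π j i)
      = (∑ i, l i * (∑ j, y j) i) - ∑ j, ∑ i, π j i * y j i := by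
    have e1 : ∑ j, S j (fun i => l i - π j i) = ∑ j, ∑ i, (l i - π j i) * y j i :=
      Finset.sum_congr rfl fun j _ => hSy j
    have e2 : (∑ i, l i * (∑ j, y j) i) = ∑ j, ∑ i, l i * y j i := by
      rw [Finset.sum_comm]
      refine Finset.sum_congr rfl fun i _ => ?_
      rw [← Finset.mul_sum]
      congr 1
      simp
    rw [e1, e2, ← Finset.sum_sub_distrib]
    refine Finset.sum_congr rfl fun j _ => ?_
    rw [← Finset.sum_sub_distrib]
    exact Finset.sum_congr rfl fun i _ => by ring
  have hdl : p - ε ≤ (∑ i, l i * n i) - ∑ j, S j (fun i => l i - π j i) := by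
    rw [hsum2]
    nlinarith
  calc p = (p - ε) + ε := by ring
    _ ≤ ((∑ i, l i * n i) - ∑ j, S j (fun i => l i - π j i)) + ε := by linarith
    _ ≤ (⨆ l' : Fin I → ℝ, ((∑ i, l' i * n i) - ∑ j, S j (fun i => l' i - π j i))) + ε :=
        add_le_add (le_ciSup hbdd l) le_rfl
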